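/- Let a broadcast channel be c-symmetric with input alphabet Z_m (i.e., for each j there are output permutations π_j, σ_j with P(Y₁=π_j(y)|X=i+j mod m) = P(Y₁=y|X=i) and similarly for Y₂). Suppose for every input distribution p, I(X;Y₁)_p - I(X;Y₂)_p ≤ I(X;Y₁)_u - I(X;Y₂)_u where u is the uniform distribution. Then for every pair (V,X) with V → X → (Y₁,Y₂) Markov and X uniformly distributed, I(V;Y₁) ≥ I(V;Y₂). -/

import Mathlib

open Real

/-- Mutual information (in bits) of a joint pmf `q` on a product of finite alphabets,
with the conventions `log 0 = 0`, `x / 0 = 0`. -/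
noncomputable def mutualInfo {A B : Type*} [Fintype A] [Fintype B] (q : A → B → ℝ) : ℝ :=
  ∑ a, ∑ b, q a b * Real.logb 2 (q a b / ((∑ b', q a b') * (∑ a', q a' b)))

/-- Conditional mutual information `I(A;B|U)` (in bits) of a joint pmf `r` on `U × A × B`. -/
noncomputable def condMutualInfo {U A B : Type*} [Fintype U] [Fintype A] [Fintype B]
    (r : U → A → B → ℝ) : ℝ :=
  ∑ u, ∑ a, ∑ b, r u a b *
    Real.logb 2 ((r u a b * (∑ a', ∑ b', r u a' b')) / ((∑ b', r u a b') * (∑ a', r u a' b)))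

/-- Representation of I(V;Y) as a triple sum. -/
lemma mutualInfo_repA {V X Y : Type*} [Fintype V] [Fintype X] [Fintype Y]
    (q : V → X → ℝ) (W : X → Y → ℝ) (hWs : ∀ x, ∑ y, W x y = 1) :
    mutualInfo (fun v y => ∑ x, q v x * W x y)
      = ∑ v, ∑ x, ∑ y, q v x * W x y *
          logb 2 ((∑ x', q v x' * W x' y) /
            ((∑ x', q v x') * (∑ x', (∑ v', q v' x') * W x' y))) := by
  have hrow : ∀ v, (∑ y, ∑ x, q v x * W x y) = ∑ x, q v x := by
    intro v; rw [Finset.sum_comm]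
    simp [← Finset.mul_sum, hWs]
  have hcol : ∀ y, (∑ v, ∑ x, q v x * W x y) = ∑ x, (∑ v, q v x) * W x y := by
    intro y; rw [Finset.sum_comm]
    simp [Finset.sum_mul]
  unfold mutualInfo
  refine Finset.sum_congr rfl fun v _ => ?_
  conv_rhs => rw [Finset.sum_comm]
  refine Finset.sum_congr rfl fun y _ => ?_
  rw [hrow, hcol, Finset.sum_mul]

/-- Representation of I(X;Y) at the X-marginal as a triple sum. -/
lemma mutualInfo_repB {V X Y : Type*} [Fintype V] [Fintype X] [Fintype Y]
    (q : V → X → ℝ) (W : X → Y → ℝ) (hWs : ∀ x, ∑ y, W x y = 1) :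
    mutualInfo (fun x y => (∑ v, q v x) * W x y)
      = ∑ v, ∑ x, ∑ y, q v x * W x y *
          logb 2 (((∑ v', q v' x) * W x y) /
            ((∑ v', q v' x) * (∑ x', (∑ v', q v' x') * W x' y))) := by
  have hrow : ∀ x, (∑ y, (∑ v, q v x) * W x y) = ∑ v, q v x := by
    intro x; rw [← Finset.mul_sum, hWs, mul_one]
  unfold mutualInfo
  conv_rhs => rw [Finset.sum_comm]
  refine Finset.sum_congr rfl fun x _ => ?_
  conv_rhs => rw [Finset.sum_comm]
  refine Finset.sum_congr rfl fun y _ => ?_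
  rw [hrow]
  simp only [mul_assoc]
  rw [← Finset.sum_mul]

/-- Representation of p(v) * I(X;Y)_{p(.|v)} as a double sum. -/
lemma mutualInfo_repC {X Y : Type*} [Fintype X] [Fintype Y] (qv : X → ℝ) (W : X → Y → ℝ)
    (hq : ∀ x, 0 ≤ qv x) (hW : ∀ x y, 0 ≤ W x y) (hWs : ∀ x, ∑ y, W x y = 1) :
    (∑ x, qv x) * mutualInfo (fun x y => (qv x / ∑ x', qv x') * W x y)
      = ∑ x, ∑ y, qv x * W x y *
          logb 2 ((qv x * W x y * (∑ x', qv x')) / (qv x * (∑ x', qv x' * W x' y))) := by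
  by_cases hp : (∑ x, qv x) = 0
  · have hz : ∀ x, qv x = 0 := by
      intro x
      have := (Finset.sum_eq_zero_iff_of_nonneg (fun i _ => hq i)).mp hp
      exact this x (Finset.mem_univ x)
    simp [hz]
  · unfold mutualInfo
    rw [Finset.mul_sum]
    refine Finset.sum_congr rfl fun x _ => ?_
    rw [Finset.mul_sum]
    refine Finset.sum_congr rfl fun y _ => ?_
    by_cases hqx : qv x = 0
    · simp [hqx]
    by_cases hWy : W x y = 0
    · simp [hWy]
    have hr : (∑ x', qv x' * W x' y) ≠ 0 := by
      have hpos : 0 < qv x * W x y :=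
        lt_of_le_of_ne (mul_nonneg (hq x) (hW x y)) (Ne.symm (mul_ne_zero hqx hWy))
      have hle : qv x * W x y ≤ ∑ x', qv x' * W x' y :=
        Finset.single_le_sum (f := fun x' => qv x' * W x' y)
          (fun i _ => mul_nonneg (hq i) (hW i y)) (Finset.mem_univ x)
      exact ne_of_gt (lt_of_lt_of_le hpos hle)
    have hrow : (∑ y', qv x / (∑ x', qv x') * W x y') = qv x / (∑ x', qv x') := by
      rw [← Finset.mul_sum, hWs, mul_one]
    have hcol : (∑ x', qv x' / (∑ x'', qv x'') * W x' y)
        = (∑ x', qv x' * W x' y) / (∑ x', qv x') := by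
      rw [Finset.sum_div]
      exact Finset.sum_congr rfl fun x' _ => div_mul_eq_mul_div _ _ _
    rw [hrow, hcol]
    have hcoef : (∑ x', qv x') * (qv x / (∑ x', qv x') * W x y) = qv x * W x y := by
      field_simp
    have harg : (qv x / (∑ x', qv x') * W x y) /
          ((qv x / (∑ x', qv x')) * ((∑ x', qv x' * W x' y) / (∑ x', qv x')))
        = (qv x * W x y * (∑ x', qv x')) / (qv x * (∑ x', qv x' * W x' y)) := by
      field_simp
    rw [← mul_assoc, hcoef, harg]

/-- Chain-rule decomposition: I(V;Y) = I(X;Y)_marginal - Σ_v p(v) I(X;Y)_{p(·|v)}. -/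
lemma mutualInfo_decomp {V X Y : Type*} [Fintype V] [Fintype X] [Fintype Y]
    (q : V → X → ℝ) (W : X → Y → ℝ)
    (hq : ∀ v x, 0 ≤ q v x) (hW : ∀ x y, 0 ≤ W x y) (hWs : ∀ x, ∑ y, W x y = 1) :
    mutualInfo (fun v y => ∑ x, q v x * W x y)
      = mutualInfo (fun x y => (∑ v, q v x) * W x y)
        - ∑ v, (∑ x, q v x) * mutualInfo (fun x y => (q v x / ∑ x', q v x') * W x y) := by
  rw [mutualInfo_repA q W hWs, mutualInfo_repB q W hWs]
  have hC : ∀ v, (∑ x, q v x) * mutualInfo (fun x y => (q v x / ∑ x', q v x') * W x y)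
      = ∑ x, ∑ y, q v x * W x y *
          logb 2 ((q v x * W x y * (∑ x', q v x')) / (q v x * (∑ x', q v x' * W x' y))) :=
    fun v => mutualInfo_repC (q v) W (hq v) hW hWs
  simp only [hC]
  rw [← Finset.sum_sub_distrib]
  refine Finset.sum_congr rfl fun v _ => ?_
  rw [← Finset.sum_sub_distrib]
  refine Finset.sum_congr rfl fun x _ => ?_
  rw [← Finset.sum_sub_distrib]
  refine Finset.sum_congr rfl fun y _ => ?_
  by_cases ht : q v x * W x y = 0
  · rw [ht]; ring
  have hqx : q v x ≠ 0 := fun h => ht (by rw [h]; ring)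
  have hWy : W x y ≠ 0 := fun h => ht (by rw [h]; ring)
  have hqxpos : 0 < q v x := lt_of_le_of_ne (hq v x) (Ne.symm hqx)
  have hWpos : 0 < W x y := lt_of_le_of_ne (hW x y) (Ne.symm hWy)
  have hp : (0:ℝ) < ∑ x', q v x' :=
    lt_of_lt_of_le hqxpos (Finset.single_le_sum (fun i _ => hq v i) (Finset.mem_univ x))
  have hu : (0:ℝ) < ∑ v', q v' x :=
    lt_of_lt_of_le hqxpos (Finset.single_le_sum (fun i _ => hq i x) (Finset.mem_univ v))
  have hr : (0:ℝ) < ∑ x', q v x' * W x' y :=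
    lt_of_lt_of_le (mul_pos hqxpos hWpos)
      (Finset.single_le_sum (fun i _ => mul_nonneg (hq v i) (hW i y)) (Finset.mem_univ x))
  have hs : (0:ℝ) < ∑ x', (∑ v', q v' x') * W x' y := by
    refine lt_of_lt_of_le (mul_pos hu hWpos) ?_
    refine Finset.single_le_sum (f := fun x' => (∑ v', q v' x') * W x' y)
      (fun i _ => mul_nonneg (Finset.sum_nonneg fun j _ => hq j i) (hW i y)) (Finset.mem_univ x)
  rw [← mul_sub]
  congr 1
  rw [Real.logb_div (by positivity) (by positivity),
      Real.logb_div (by positivity) (by positivity),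
      Real.logb_div (by positivity) (by positivity),
      Real.logb_mul (by positivity) (by positivity),
      Real.logb_mul (by positivity) (by positivity),
      Real.logb_mul (by positivity) (by positivity),
      Real.logb_mul (by positivity) (by positivity),
      Real.logb_mul (by positivity) (by positivity),
      Real.logb_mul (by positivity) (by positivity)]
  ring

/-- For a c-symmetric broadcast channel on ℤ/m in which Y₁ is a dominantly c-symmetric
receiver, every Markov chain V → X → (Y₁,Y₂) with X uniform satisfies I(V;Y₁) ≥ I(V;Y₂). -/
theorem stmt17 {m : ℕ} [NeZero m] {Y₁ Y₂ : Type*} [Fintype Y₁] [Fintype Y₂]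
    (W₁ : ZMod m → Y₁ → ℝ) (W₂ : ZMod m → Y₂ → ℝ)
    (hW₁ : ∀ x y, 0 ≤ W₁ x y) (hW₁s : ∀ x, ∑ y, W₁ x y = 1)
    (hW₂ : ∀ x y, 0 ≤ W₂ x y) (hW₂s : ∀ x, ∑ y, W₂ x y = 1)
    (perm₁ : ZMod m → Equiv.Perm Y₁)  (perm₂ : ZMod m → Equiv.Perm Y₂)
    (hπ : ∀ j i y, W₁ (i + j) (perm₁ j y) = W₁ i y)
    (hσ : ∀ j i y, W₂ (i + j) (perm₂ j y) = W₂ i y)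
    (hdom : ∀ p : ZMod m → ℝ, (∀ x, 0 ≤ p x) → (∑ x, p x) = 1 →
        mutualInfo (fun x y₁ => p x * W₁ x y₁) - mutualInfo (fun x y₂ => p x * W₂ x y₂)
          ≤ mutualInfo (fun x y₁ => (1 / (m : ℝ)) * W₁ x y₁)
            - mutualInfo (fun x y₂ => (1 / (m : ℝ)) * W₂ x y₂)) :
    ∀ (k : ℕ) (q : Fin k → ZMod m → ℝ), (∀ v x, 0 ≤ q v x) →
      (∀ x, ∑ v, q v x = 1 / (m : ℝ)) →
      mutualInfo (fun v y₂ => ∑ x, q v x * W₂ x y₂)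
        ≤ mutualInfo (fun v y₁ => ∑ x, q v x * W₁ x y₁) := by
  intro k q hq hqm
  have hm : (m : ℝ) ≠ 0 := Nat.cast_ne_zero.mpr (NeZero.ne m)
  have hmarg₁ : (fun (x : ZMod m) (y : Y₁) => (∑ v, q v x) * W₁ x y)
      = fun x y => (1 / (m : ℝ)) * W₁ x y := by
    funext x y; rw [hqm]
  have hmarg₂ : (fun (x : ZMod m) (y : Y₂) => (∑ v, q v x) * W₂ x y)
      = fun x y => (1 / (m : ℝ)) * W₂ x y := by
    funext x y; rw [hqm]
  have h₁ := mutualInfo_decomp q W₁ hq hW₁ hW₁s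
  have h₂ := mutualInfo_decomp q W₂ hq hW₂ hW₂s
  rw [hmarg₁] at h₁
  rw [hmarg₂] at h₂
  set D₁ := mutualInfo (fun x y₁ => (1 / (m : ℝ)) * W₁ x y₁) with hD₁
  set D₂ := mutualInfo (fun x y₂ => (1 / (m : ℝ)) * W₂ x y₂) with hD₂
  -- the sum of the probabilities p v is 1
  have hsum1 : (∑ v, ∑ x, q v x) = 1 := by
    rw [Finset.sum_comm]
    have : ∀ x : ZMod m, (∑ v, q v x) = 1 / (m : ℝ) := hqm
    simp only [this]
    rw [Finset.sum_const, Finset.card_univ, ZMod.card, nsmul_eq_mul]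
    field_simp
  -- per-v bound from hdom
  have hkey : (∑ v, (∑ x, q v x) * mutualInfo (fun x y => (q v x / ∑ x', q v x') * W₁ x y))
      - (∑ v, (∑ x, q v x) * mutualInfo (fun x y => (q v x / ∑ x', q v x') * W₂ x y))
      ≤ D₁ - D₂ := by
    rw [← Finset.sum_sub_distrib]
    calc (∑ v, ((∑ x, q v x) * mutualInfo (fun x y => (q v x / ∑ x', q v x') * W₁ x y)
            - (∑ x, q v x) * mutualInfo (fun x y => (q v x / ∑ x', q v x') * W₂ x y)))
        ≤ ∑ v, (∑ x, q v x) * (D₁ - D₂) := by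
          refine Finset.sum_le_sum fun v _ => ?_
          by_cases hpv : (∑ x, q v x) = 0
          · rw [hpv]; simp
          have hpvpos : 0 < ∑ x, q v x :=
            lt_of_le_of_ne (Finset.sum_nonneg fun i _ => hq v i) (Ne.symm hpv)
          have hcond := hdom (fun x => q v x / ∑ x', q v x')
            (fun x => div_nonneg (hq v x) (le_of_lt hpvpos))
            (by rw [← Finset.sum_div, div_self hpv])
          rw [← mul_sub]
          exact mul_le_mul_of_nonneg_left hcond (le_of_lt hpvpos)
      _ = D₁ - D₂ := by rw [← Finset.sum_mul, hsum1, one_mul]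
  linarith
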